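/- Let Ω ⊂ ℝ³ be a bounded open set and let u ∈ C³(ℝ³) be such that the set {∇u ≠ 0} is contained in a compact subset of Ω. Then ∫_{Ω ∩ {∇u ≠ 0}} [ (Δu)² − tr( (∇²u)² ) ] dx = 0; equivalently, ∫_{Ω ∩ {∇u ≠ 0}} div( Δu·∇u − (∇²u)·∇u ) dx = 0. -/

import Mathlib

open MeasureTheory

/-- `i`-th partial derivative of `u : ℝ³ → ℝ`. -/
noncomputable def pd (u : (Fin 3 → ℝ) → ℝ) (i : Fin 3) (x : Fin 3 → ℝ) : ℝ :=
  fderiv ℝ u x (Pi.single i 1)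

/-- Hessian entry `∂_i ∂_j u`. -/
noncomputable def hess (u : (Fin 3 → ℝ) → ℝ) (i j : Fin 3) (x : Fin 3 → ℝ) : ℝ :=
  pd (pd u j) i x

/-- Laplacian `Δu = tr(∇²u)`. -/
noncomputable def lap (u : (Fin 3 → ℝ) → ℝ) (x : Fin 3 → ℝ) : ℝ :=
  ∑ i, hess u i i x

/-- Divergence of a vector field `F : ℝ³ → ℝ³`. -/
noncomputable def divg (F : (Fin 3 → ℝ) → (Fin 3 → ℝ)) (x : Fin 3 → ℝ) : ℝ :=
  ∑ i, fderiv ℝ (fun y => F y i) x (Pi.single i 1)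

/-- If `Ω ⊂ ℝ³` is bounded and open, `u ∈ C³(ℝ³)` and `{∇u ≠ 0}` is contained in a
compact subset of `Ω`, then `∫_{Ω ∩ {∇u ≠ 0}} [(Δu)² − tr((∇²u)²)] dx = 0`;
equivalently `∫_{Ω ∩ {∇u ≠ 0}} div(Δu·∇u − (∇²u)·∇u) dx = 0`. -/
-- smoothness of pd
lemma contDiff_pd {u : (Fin 3 → ℝ) → ℝ} {n m : ℕ} (hu : ContDiff ℝ n u) (h : m + 1 ≤ n)
    (i : Fin 3) : ContDiff ℝ m (pd u i) := by
  have := hu.fderiv_right (m := m) (by exact_mod_cast h)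
  exact this.clm_apply contDiff_const

lemma contDiff_hess {u : (Fin 3 → ℝ) → ℝ} (hu : ContDiff ℝ 3 u) (i j : Fin 3) :
    ContDiff ℝ 1 (hess u i j) :=
  contDiff_pd (n := 2) (contDiff_pd (n := 3) hu (by norm_num) j) (by norm_num) i

lemma contDiff_lap {u : (Fin 3 → ℝ) → ℝ} (hu : ContDiff ℝ 3 u) : ContDiff ℝ 1 (lap u) := by
  unfold lap
  exact ContDiff.sum fun i _ => contDiff_hess hu i i

lemma pd_of_hasFDerivAt {f : (Fin 3 → ℝ) → ℝ} {x : Fin 3 → ℝ} {i : Fin 3}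
    {L : (Fin 3 → ℝ) →L[ℝ] ℝ} (h : HasFDerivAt f L x) : pd f i x = L (Pi.single i 1) := by
  rw [pd, h.fderiv]

/-- second derivative symmetry for `hess`. -/
lemma hess_symm {f : (Fin 3 → ℝ) → ℝ} (hf : ContDiff ℝ 2 f) (i j : Fin 3) (x : Fin 3 → ℝ) :
    hess f i j x = hess f j i x := by
  have hdf : ContDiff ℝ 1 (fderiv ℝ f) := hf.fderiv_right (by norm_num)
  have h1 : ∀ y, HasFDerivAt f (fderiv ℝ f y) y := fun y =>
    (hf.differentiable (by norm_num) y).hasFDerivAt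
  have h2 : HasFDerivAt (fderiv ℝ f) (fderiv ℝ (fderiv ℝ f) x) x :=
    ((hdf.differentiable (by norm_num)) x).hasFDerivAt
  have key : ∀ a b : Fin 3, hess f a b x
      = fderiv ℝ (fderiv ℝ f) x (Pi.single a 1) (Pi.single b 1) := by
    intro a b
    have h3 : HasFDerivAt (fun y => fderiv ℝ f y (Pi.single b 1))
        ((fderiv ℝ f x).comp (0 : (Fin 3 → ℝ) →L[ℝ] (Fin 3 → ℝ))
          + (fderiv ℝ (fderiv ℝ f) x).flip (Pi.single b 1)) x :=
      h2.clm_apply (hasFDerivAt_const _ _)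
    have : hess f a b x = _ := pd_of_hasFDerivAt (i := a) h3
    simpa using this
  rw [key i j, key j i]
  exact second_derivative_symmetric h1 h2 _ _

lemma pd_mul {f g : (Fin 3 → ℝ) → ℝ} {x : Fin 3 → ℝ} (hf : DifferentiableAt ℝ f x)
    (hg : DifferentiableAt ℝ g x) (i : Fin 3) :
    pd (fun y => f y * g y) i x = pd f i x * g x + f x * pd g i x := by
  have := pd_of_hasFDerivAt (i := i) (hf.hasFDerivAt.mul hg.hasFDerivAt)
  simp only [pd] at this ⊢
  rw [show (fun y => f y * g y) = f * g from rfl, this]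
  simp [ContinuousLinearMap.add_apply, ContinuousLinearMap.smul_apply]
  ring

lemma pd_sub {f g : (Fin 3 → ℝ) → ℝ} {x : Fin 3 → ℝ} (hf : DifferentiableAt ℝ f x)
    (hg : DifferentiableAt ℝ g x) (i : Fin 3) :
    pd (fun y => f y - g y) i x = pd f i x - pd g i x := by
  have := pd_of_hasFDerivAt (i := i) (hf.hasFDerivAt.sub hg.hasFDerivAt)
  exact this

lemma pd_sum {f : Fin 3 → (Fin 3 → ℝ) → ℝ} {x : Fin 3 → ℝ}
    (hf : ∀ j, DifferentiableAt ℝ (f j) x) (i : Fin 3) :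
    pd (fun y => ∑ j, f j y) i x = ∑ j, pd (f j) i x := by
  have := pd_of_hasFDerivAt (i := i)
    (HasFDerivAt.fun_sum (fun j (_ : j ∈ Finset.univ) => (hf j).hasFDerivAt))
  simpa [pd] using this

lemma third_symm {u : (Fin 3 → ℝ) → ℝ} (hu : ContDiff ℝ 3 u) (i j : Fin 3) (x : Fin 3 → ℝ) :
    pd (hess u i j) i x = pd (hess u i i) j x := by
  have hu2 : ContDiff ℝ 2 u := hu.of_le (by norm_num)
  have hv : ContDiff ℝ 2 (pd u i) := contDiff_pd (n := 3) hu (by norm_num) i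
  have h1 : hess u i j = hess u j i := funext (hess_symm hu2 i j)
  rw [h1]
  exact hess_symm hv i j x

lemma divg_eq {u : (Fin 3 → ℝ) → ℝ} (hu : ContDiff ℝ 3 u) (x : Fin 3 → ℝ) :
    divg (fun y i => lap u y * pd u i y - ∑ j, hess u i j y * pd u j y) x
      = (lap u x) ^ 2 - ∑ i, ∑ j, hess u i j x * hess u j i x := by
  have hu2 : ContDiff ℝ 2 u := hu.of_le (by norm_num)
  have dpd : ∀ (i : Fin 3) (y : Fin 3 → ℝ), DifferentiableAt ℝ (pd u i) y := fun i y =>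
    ((contDiff_pd (n := 3) (m := 2) hu (by norm_num) i).differentiable (by norm_num)) y
  have dhess : ∀ (i j : Fin 3) (y : Fin 3 → ℝ), DifferentiableAt ℝ (hess u i j) y := fun i j y =>
    ((contDiff_hess hu i j).differentiable (by norm_num)) y
  have dlap : ∀ y, DifferentiableAt ℝ (lap u) y := fun y =>
    ((contDiff_lap hu).differentiable (by norm_num)) y
  have hFi : ∀ i : Fin 3,
      pd (fun y => lap u y * pd u i y - ∑ j, hess u i j y * pd u j y) i x
        = pd (lap u) i x * pd u i x + lap u x * hess u i i x
          - ∑ j, (pd (hess u i j) i x * pd u j x + hess u i j x * hess u i j x) := by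
    intro i
    rw [pd_sub (f := fun y => lap u y * pd u i y) (g := fun y => ∑ j, hess u i j y * pd u j y)
          ((dlap x).mul (dpd i x))
          (DifferentiableAt.fun_sum fun j _ => (dhess i j x).mul (dpd j x)),
        pd_mul (dlap x) (dpd i x),
        pd_sum (f := fun j y => hess u i j y * pd u j y) (fun j => (dhess i j x).mul (dpd j x))]
    congr 1
    refine Finset.sum_congr rfl fun j _ => ?_
    rw [pd_mul (dhess i j x) (dpd j x)]
    rfl
  have hdivg : divg (fun y i => lap u y * pd u i y - ∑ j, hess u i j y * pd u j y) x
      = ∑ i, pd (fun y => lap u y * pd u i y - ∑ j, hess u i j y * pd u j y) i x := rfl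
  rw [hdivg]
  simp only [hFi]
  have hpdlap : ∀ j : Fin 3, pd (lap u) j x = ∑ i, pd (hess u i i) j x := by
    intro j
    exact pd_sum (fun i => dhess i i x) j
  have key : ∑ i, ∑ j, pd (hess u i j) i x * pd u j x = ∑ i, pd (lap u) i x * pd u i x := by
    rw [Finset.sum_comm]
    refine Finset.sum_congr rfl fun j _ => ?_
    rw [hpdlap j, Finset.sum_mul]
    refine Finset.sum_congr rfl fun i _ => ?_
    rw [third_symm hu i j x]
  have hsq : ∑ i, ∑ j, hess u i j x * hess u i j x
      = ∑ i, ∑ j, hess u i j x * hess u j i x := by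
    refine Finset.sum_congr rfl fun i _ => Finset.sum_congr rfl fun j _ => ?_
    rw [hess_symm hu2 i j x]
  have hlapsq : ∑ i, lap u x * hess u i i x = (lap u x) ^ 2 := by
    rw [← Finset.mul_sum]; rw [show (∑ i, hess u i i x) = lap u x from rfl]; ring
  simp only [Finset.sum_sub_distrib, Finset.sum_add_distrib]
  rw [key, hsq, hlapsq]
  ring

lemma ae_hess_zero {u : (Fin 3 → ℝ) → ℝ} (hu : ContDiff ℝ 3 u) :
    ∀ᵐ x, (∀ i, pd u i x = 0) → ∀ i j, hess u i j x = 0 := by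
  classical
  set g : (Fin 3 → ℝ) → (Fin 3 → ℝ) := fun x j => pd u j x with hg
  have hgc : ContDiff ℝ 2 g := by
    rw [contDiff_pi]
    exact fun j => contDiff_pd (n := 3) hu (by norm_num) j
  have hgd : Differentiable ℝ g := hgc.differentiable (by norm_num)
  set s : Set (Fin 3 → ℝ) := {x | ∀ i, pd u i x = 0} with hs
  have hsc : IsClosed s := by
    have : s = ⋂ i, (pd u i) ⁻¹' {0} := by
      ext x; simp [hs, Set.mem_iInter]
    rw [this]
    exact isClosed_iInter fun i =>
      IsClosed.preimage ((contDiff_pd (n := 3) (m := 2) hu (by norm_num) i).continuous)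
        isClosed_singleton
  have hzero : ∀ x ∈ s, g x = 0 := by
    intro x hx; funext j; exact hx j
  have happ : ApproximatesLinearOn g (0 : (Fin 3 → ℝ) →L[ℝ] (Fin 3 → ℝ)) s 0 := by
    intro x hx y hy
    simp [hzero x hx, hzero y hy]
  have hae := happ.norm_fderiv_sub_le (μ := volume) hsc.measurableSet
    (fun x => fderiv ℝ g x)
    (fun x _ => (hgd x).hasFDerivAt.hasFDerivWithinAt)
  have hae' : ∀ᵐ x, x ∈ s → fderiv ℝ g x = 0 := by
    refine (ae_imp_of_ae_restrict ?_)
    filter_upwards [hae] with x hx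
    have : ‖fderiv ℝ g x - 0‖₊ = 0 := le_antisymm hx bot_le
    simpa [sub_zero] using (nnnorm_eq_zero.mp this)
  filter_upwards [hae'] with x hx hmem i j
  have h0 : fderiv ℝ g x = 0 := hx hmem
  have hcomp : fderiv ℝ (fun y => g y j) x = (ContinuousLinearMap.proj j).comp (fderiv ℝ g x) := by
    exact ((ContinuousLinearMap.proj (R := ℝ) (φ := fun _ : Fin 3 => ℝ) j).hasFDerivAt.comp x
      (hgd x).hasFDerivAt).fderiv
  have : hess u i j x = fderiv ℝ (fun y => g y j) x (Pi.single i 1) := rfl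
  rw [this, hcomp, h0]
  simp

theorem stmt_9 (Ω : Set (Fin 3 → ℝ)) (hΩo : IsOpen Ω) (hΩb : Bornology.IsBounded Ω)
    (u : (Fin 3 → ℝ) → ℝ) (hu : ContDiff ℝ 3 u)
    (K : Set (Fin 3 → ℝ)) (hK : IsCompact K) (hKΩ : K ⊆ Ω)
    (hgrad : {x | ∃ i, pd u i x ≠ 0} ⊆ K) :
    (∫ x in Ω ∩ {x | ∃ i, pd u i x ≠ 0},
        ((lap u x) ^ 2 - ∑ i, ∑ j, hess u i j x * hess u j i x)) = 0
    ∧ (∫ x in Ω ∩ {x | ∃ i, pd u i x ≠ 0},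
        divg (fun y i => lap u y * pd u i y - ∑ j, hess u i j y * pd u j y) x) = 0 := by
  classical
  set F : (Fin 3 → ℝ) → (Fin 3 → ℝ) :=
    fun y i => lap u y * pd u i y - ∑ j, hess u i j y * pd u j y with hF
  set U : Set (Fin 3 → ℝ) := {x | ∃ i, pd u i x ≠ 0} with hU
  have hΩU : Ω ∩ U = U := Set.inter_eq_right.2 (hgrad.trans hKΩ)
  -- smoothness of components of F
  have hFc : ∀ i, ContDiff ℝ 1 (fun y => F y i) := by
    intro i
    exact ((contDiff_lap hu).mul (contDiff_pd (n := 3) hu (by norm_num) i)).sub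
      (ContDiff.sum fun j _ => (contDiff_hess hu j j |>.const_smul 0 |> fun _ => by
        exact (contDiff_hess hu i j).mul (contDiff_pd (n := 3) hu (by norm_num) j)))
  have hFd : ∀ i x, DifferentiableAt ℝ (fun y => F y i) x := fun i x =>
    ((hFc i).differentiable (by norm_num)) x
  have hdivgc : Continuous (divg F) := by
    refine continuous_finset_sum _ fun i _ => ?_
    exact ((hFc i).continuous_fderiv (by norm_num)).clm_apply continuous_const
  -- F vanishes where the gradient vanishes
  have hF0 : ∀ x, x ∉ U → ∀ i, F x i = 0 := by
    intro x hx i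
    have h0 : ∀ j, pd u j x = 0 := by
      by_contra h; push_neg at h
      exact hx (by simpa [hU] using h)
    simp [hF, h0]
  -- a big box containing K
  obtain ⟨R, hR0, hRK⟩ : ∃ R : ℝ, 0 ≤ R ∧ K ⊆ Metric.closedBall 0 R := by
    obtain ⟨R, hR⟩ := hK.isBounded.subset_closedBall 0
    exact ⟨max R 0, le_max_right _ _,
      hR.trans (Metric.closedBall_subset_closedBall (le_max_left _ _))⟩
  set a : Fin 3 → ℝ := fun _ => -(R + 1) with ha
  set b : Fin 3 → ℝ := fun _ => R + 1 with hb
  have hab : a ≤ b := fun i => by simp [ha, hb]; linarith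
  have hKIcc : K ⊆ Set.Icc a b := by
    intro x hx
    have hxn : ‖x‖ ≤ R := by simpa using hRK hx
    have hxi : ∀ i, |x i| ≤ R := fun i => (norm_le_pi_norm x i).trans hxn
    constructor
    · intro i
      have := (abs_le.1 (hxi i)).1
      simp only [ha]; linarith
    · intro i
      have := (abs_le.1 (hxi i)).2
      simp only [hb]; linarith
  have hUK : U ⊆ K := hgrad
  have hUIcc : U ⊆ Set.Icc a b := hUK.trans hKIcc
  -- divergence theorem over the box: integral is zero since F vanishes on the faces
  have hbox : (∫ x in Set.Icc a b, divg F x) = 0 := by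
    have := MeasureTheory.integral_divergence_of_hasFDerivAt_off_countable' a b hab
      (fun i y => F y i) (fun i x => fderiv ℝ (fun y => F y i) x) ∅ Set.countable_empty
      (fun i => ((hFc i).continuous).continuousOn)
      (fun x _ i => (hFd i x).hasFDerivAt)
      ((hdivgc.continuousOn).integrableOn_compact isCompact_Icc)
    rw [show (∫ x in Set.Icc a b, divg F x) = ∫ x in Set.Icc a b,
        ∑ i, fderiv ℝ (fun y => F y i) x (Pi.single i 1) from rfl]
    rw [this]
    refine Finset.sum_eq_zero fun i _ => ?_
    have hface : ∀ (c : ℝ), |c| = R + 1 → ∀ y : Fin 2 → ℝ,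
        F (Fin.insertNth (α := fun _ => ℝ) i c y) i = 0 := by
      intro c hc y
      refine hF0 _ (fun hy => ?_) i
      have hyK := hUK hy
      have hn : ‖(Fin.insertNth (α := fun _ => ℝ) i c y : Fin 3 → ℝ)‖ ≤ R := by
        simpa using hRK hyK
      have h1 : |(Fin.insertNth (α := fun _ => ℝ) i c y : Fin 3 → ℝ) i| ≤ R :=
        (norm_le_pi_norm _ i).trans hn
      rw [Fin.insertNth_apply_same] at h1
      rw [hc] at h1
      linarith
    have hfront : ∀ y : Fin 2 → ℝ, F (Fin.insertNth (α := fun _ => ℝ) i (b i) y) i = 0 :=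
      hface (b i) (by simp [hb]; linarith) 
    have hback : ∀ y : Fin 2 → ℝ, F (Fin.insertNth (α := fun _ => ℝ) i (a i) y) i = 0 :=
      hface (a i) (by simp [ha]; rw [abs_of_nonpos (by linarith)]; ring)
    simp only [hfront, hback]
    simp
  -- pass from the box to U
  have hUdiv : (∫ x in U, divg F x) = 0 := by
    rw [← setIntegral_eq_of_subset_of_ae_diff_eq_zero measurableSet_Icc.nullMeasurableSet hUIcc ?_]
    · exact hbox
    · filter_upwards [ae_hess_zero hu] with x hx hmem
      have hxU : ∀ j, pd u j x = 0 := by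
        have := hmem.2
        by_contra h; push_neg at h
        exact this (by simpa [hU] using h)
      have hh := hx hxU
      rw [divg_eq hu x]
      have hlap0 : lap u x = 0 := by
        rw [show lap u x = ∑ i, hess u i i x from rfl]
        exact Finset.sum_eq_zero fun i _ => hh i i
      rw [hlap0]
      simp [hh]
  constructor
  · rw [hΩU, show (∫ x in U, ((lap u x) ^ 2 - ∑ i, ∑ j, hess u i j x * hess u j i x))
        = ∫ x in U, divg F x from
        integral_congr_ae (Filter.Eventually.of_forall fun x => (divg_eq hu x).symm)]
    exact hUdiv
  · rw [hΩU]; exact hUdiv
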